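/- Let ℓ ≥ 3 and identify the vertex sets of both P_{2ℓ} and C_{2ℓ} with {1,…,2ℓ}. If W = {w_1,…,w_ℓ} where w_i ∈ {2i−1, 2i} for each i ∈ {1,…,ℓ}, then W is a strictly locating set of P_{2ℓ} and W is a strictly locating set of C_{2ℓ}. -/

import Mathlib

/-- The lexicographic product of two simple graphs. -/
def lexProd {α β : Type*} (G : SimpleGraph α) (H : SimpleGraph β) :
    SimpleGraph (α × β) where
  Adj p q := G.Adj p.1 q.1 ∨ (p.1 = q.1 ∧ H.Adj p.2 q.2)
  symm := by
    constructor
    rintro ⟨g, h⟩ ⟨g', h'⟩ (hg | ⟨rfl, hh⟩)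
    · exact Or.inl hg.symm
    · exact Or.inr ⟨rfl, hh.symm⟩
  loopless := by
    constructor
    rintro ⟨g, h⟩ (hg | ⟨-, hh⟩)
    · exact G.irrefl hg
    · exact H.irrefl hh

/-- `W` is a resolving set of `G`. -/
def IsResolvingSet {α : Type*} (G : SimpleGraph α) (W : Set α) : Prop :=
  ∀ x y : α, x ≠ y → ∃ z ∈ W, G.dist x z ≠ G.dist y z

/-- `S` is a locating set of `G`. -/
def IsLocatingSet {α : Type*} (G : SimpleGraph α) (S : Set α) : Prop :=
  ∀ u ∉ S, ∀ v ∉ S, u ≠ v → G.neighborSet u ∩ S ≠ G.neighborSet v ∩ S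

/-- `S` is a strictly locating set of `G`. -/
def IsStrictlyLocatingSet {α : Type*} (G : SimpleGraph α) (S : Set α) : Prop :=
  IsLocatingSet G S ∧ ∀ u ∉ S, G.neighborSet u ∩ S ≠ S

/-- `S` is a dominating set of `G`. -/
def IsDominatingSet {α : Type*} (G : SimpleGraph α) (S : Set α) : Prop :=
  ∀ v ∉ S, ∃ u ∈ S, G.Adj v u

/-- `u` and `v` are true twins in `G`. -/
def AreTrueTwins {α : Type*} (G : SimpleGraph α) (u v : α) : Prop :=
  G.Adj u v ∧ G.neighborSet u \ {v} = G.neighborSet v \ {u}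

/-- `u` and `v` are false twins in `G`. -/
def AreFalseTwins {α : Type*} (G : SimpleGraph α) (u v : α) : Prop :=
  u ≠ v ∧ ¬ G.Adj u v ∧ G.neighborSet u \ {v} = G.neighborSet v \ {u}

/-- The path on `n` vertices `0, 1, …, n-1` (vertex `i` represents the
vertex labelled `i+1` in `{1, …, n}`). -/
def PathG (n : ℕ) : SimpleGraph (Fin n) where
  Adj i j := (i : ℕ) + 1 = (j : ℕ) ∨ (j : ℕ) + 1 = (i : ℕ)
  symm := ⟨fun i j h => Or.symm h⟩
  loopless := ⟨fun i h => by rcases h with h | h <;> omega⟩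

/-- The cycle on `n` vertices `0, 1, …, n-1` (vertex `i` represents the
vertex labelled `i+1` in `{1, …, n}`). -/
def CycleG (n : ℕ) : SimpleGraph (Fin n) where
  Adj i j := i ≠ j ∧ (((i : ℕ) + 1) % n = (j : ℕ) ∨ ((j : ℕ) + 1) % n = (i : ℕ))
  symm := ⟨fun i j h => ⟨h.1.symm, Or.symm h.2⟩⟩
  loopless := ⟨fun i h => h.1 rfl⟩

/-- The metric dimension of `G`: the minimum cardinality of a resolving set. -/
noncomputable def metricDim {α : Type*} [Fintype α] (G : SimpleGraph α) : ℕ :=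
  sInf {n | ∃ W : Finset α, W.card = n ∧ IsResolvingSet G ↑W}

/-- The set `W ⊆ Fin n` contains the vertex with underlying value `k`. -/
def valMem {n : ℕ} (W : Set (Fin n)) (k : ℕ) : Prop :=
  ∃ x ∈ W, (x : ℕ) = k


private lemma modsucc13 (n x : ℕ) (hx : x < n) :
    ((x + 1) % n = x + 1 ∧ x + 1 < n) ∨ ((x + 1) % n = 0 ∧ x + 1 = n) := by
  rcases Nat.lt_or_ge (x + 1) n with h | h
  · exact Or.inl ⟨Nat.mod_eq_of_lt h, h⟩
  · have h' : x + 1 = n := by omega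
    subst h'
    exact Or.inr ⟨Nat.mod_self _, rfl⟩

/-- For `ℓ ≥ 3`, a set consisting of one vertex from each pair
`{2i-1, 2i}`, `i ∈ [ℓ]` (in `Fin (2ℓ)` labelling: one of `2i, 2i+1` for each
`i ∈ Fin ℓ`), is a strictly locating set of `P_{2ℓ}` and of `C_{2ℓ}`. -/
theorem stmt13 (ℓ : ℕ) (hℓ : 3 ≤ ℓ) (w : Fin ℓ → Fin (2 * ℓ))
    (hw : ∀ i : Fin ℓ, (w i : ℕ) = 2 * (i : ℕ) ∨ (w i : ℕ) = 2 * (i : ℕ) + 1) :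
    IsStrictlyLocatingSet (PathG (2 * ℓ)) (Set.range w) ∧
    IsStrictlyLocatingSet (CycleG (2 * ℓ)) (Set.range w) := by
  have hval_ne : ∀ (a b : Fin (2 * ℓ)), a ≠ b → (a : ℕ) ≠ (b : ℕ) :=
    fun a b h h' => h (Fin.ext h')
  -- every vertex not in the range has its "partner" (the other element of its
  -- block) in the range
  have hpartner : ∀ u : Fin (2 * ℓ), u ∉ Set.range w →
      ∃ p : Fin ℓ, ((w p : ℕ) = (u : ℕ) + 1 ∨ (w p : ℕ) + 1 = (u : ℕ)) ∧
        (w p : ℕ) / 2 = (u : ℕ) / 2 := by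
    intro u hu
    have hlt : (u : ℕ) / 2 < ℓ := by have := u.isLt; omega
    refine ⟨⟨(u : ℕ) / 2, hlt⟩, ?_⟩
    have h1 : (w ⟨(u : ℕ) / 2, hlt⟩ : ℕ) = 2 * ((u : ℕ) / 2) ∨
        (w ⟨(u : ℕ) / 2, hlt⟩ : ℕ) = 2 * ((u : ℕ) / 2) + 1 := hw ⟨(u : ℕ) / 2, hlt⟩
    have h2 : (w ⟨(u : ℕ) / 2, hlt⟩ : ℕ) ≠ (u : ℕ) := by
      intro h; exact hu ⟨_, Fin.ext h⟩
    have h3 := u.isLt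
    omega
  -- each block contributes one element to the range
  have hblocks : ∀ k : ℕ, k < ℓ → ∃ x : Fin (2 * ℓ), x ∈ Set.range w ∧
      ((x : ℕ) = 2 * k ∨ (x : ℕ) = 2 * k + 1) := by
    intro k hk
    exact ⟨w ⟨k, hk⟩, ⟨_, rfl⟩, hw ⟨k, hk⟩⟩
  constructor
  · -- Path
    constructor
    · intro u hu v hv huv heq
      obtain ⟨pu, hpu1, hpu2⟩ := hpartner u hu
      obtain ⟨pv, hpv1, hpv2⟩ := hpartner v hv
      have hadj1 : (PathG (2 * ℓ)).Adj u (w pu) := by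
        show (u : ℕ) + 1 = (w pu : ℕ) ∨ (w pu : ℕ) + 1 = (u : ℕ)
        omega
      have hadj2 : (PathG (2 * ℓ)).Adj v (w pv) := by
        show (v : ℕ) + 1 = (w pv : ℕ) ∨ (w pv : ℕ) + 1 = (v : ℕ)
        omega
      have h1 : w pu ∈ (PathG (2 * ℓ)).neighborSet v := by
        have hm : w pu ∈ (PathG (2 * ℓ)).neighborSet u ∩ Set.range w :=
          ⟨hadj1, ⟨pu, rfl⟩⟩
        rw [heq] at hm; exact hm.1
      have h2 : w pv ∈ (PathG (2 * ℓ)).neighborSet u := by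
        have hm : w pv ∈ (PathG (2 * ℓ)).neighborSet v ∩ Set.range w :=
          ⟨hadj2, ⟨pv, rfl⟩⟩
        rw [← heq] at hm; exact hm.1
      have h1' : (v : ℕ) + 1 = (w pu : ℕ) ∨ (w pu : ℕ) + 1 = (v : ℕ) := h1
      have h2' : (u : ℕ) + 1 = (w pv : ℕ) ∨ (w pv : ℕ) + 1 = (u : ℕ) := h2
      have h3 : (v : ℕ) ≠ (w pu : ℕ) :=
        hval_ne _ _ (fun h => hv (h ▸ ⟨pu, rfl⟩))
      have h4 : (u : ℕ) ≠ (w pv : ℕ) :=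
        hval_ne _ _ (fun h => hu (h ▸ ⟨pv, rfl⟩))
      have h5 : (u : ℕ) ≠ (v : ℕ) := hval_ne _ _ huv
      have h6 := u.isLt
      have h7 := v.isLt
      omega
    · intro u hu heq
      obtain ⟨x0, hx0m, hx0⟩ := hblocks 0 (by omega)
      obtain ⟨x1, hx1m, hx1⟩ := hblocks 1 (by omega)
      obtain ⟨x2, hx2m, hx2⟩ := hblocks 2 (by omega)
      have hn : ∀ x : Fin (2 * ℓ), x ∈ Set.range w →
          x ∈ (PathG (2 * ℓ)).neighborSet u := by
        intro x hx
        rw [← heq] at hx; exact hx.1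
      have h0 : (u : ℕ) + 1 = (x0 : ℕ) ∨ (x0 : ℕ) + 1 = (u : ℕ) := hn x0 hx0m
      have h1 : (u : ℕ) + 1 = (x1 : ℕ) ∨ (x1 : ℕ) + 1 = (u : ℕ) := hn x1 hx1m
      have h2 : (u : ℕ) + 1 = (x2 : ℕ) ∨ (x2 : ℕ) + 1 = (u : ℕ) := hn x2 hx2m
      omega
  · -- Cycle
    constructor
    · intro u hu v hv huv heq
      obtain ⟨pu, hpu1, hpu2⟩ := hpartner u hu
      obtain ⟨pv, hpv1, hpv2⟩ := hpartner v hv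
      have hub := u.isLt
      have hvb := v.isLt
      have hpub := (w pu).isLt
      have hpvb := (w pv).isLt
      have hadj1 : (CycleG (2 * ℓ)).Adj u (w pu) := by
        refine ⟨Fin.ne_of_val_ne (by omega), ?_⟩
        rcases hpu1 with h | h
        · exact Or.inl (by rw [Nat.mod_eq_of_lt (by omega)]; omega)
        · exact Or.inr (by rw [Nat.mod_eq_of_lt (by omega)]; omega)
      have hadj2 : (CycleG (2 * ℓ)).Adj v (w pv) := by
        refine ⟨Fin.ne_of_val_ne (by omega), ?_⟩
        rcases hpv1 with h | h
        · exact Or.inl (by rw [Nat.mod_eq_of_lt (by omega)]; omega)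
        · exact Or.inr (by rw [Nat.mod_eq_of_lt (by omega)]; omega)
      have h1 : w pu ∈ (CycleG (2 * ℓ)).neighborSet v := by
        have hm : w pu ∈ (CycleG (2 * ℓ)).neighborSet u ∩ Set.range w :=
          ⟨hadj1, ⟨pu, rfl⟩⟩
        rw [heq] at hm; exact hm.1
      have h2 : w pv ∈ (CycleG (2 * ℓ)).neighborSet u := by
        have hm : w pv ∈ (CycleG (2 * ℓ)).neighborSet v ∩ Set.range w :=
          ⟨hadj2, ⟨pv, rfl⟩⟩
        rw [← heq] at hm; exact hm.1
      have h1' : ((v : ℕ) + 1) % (2 * ℓ) = (w pu : ℕ) ∨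
          ((w pu : ℕ) + 1) % (2 * ℓ) = (v : ℕ) := h1.2
      have h2' : ((u : ℕ) + 1) % (2 * ℓ) = (w pv : ℕ) ∨
          ((w pv : ℕ) + 1) % (2 * ℓ) = (u : ℕ) := h2.2
      have h3 : (v : ℕ) ≠ (w pu : ℕ) :=
        hval_ne _ _ (fun h => hv (h ▸ ⟨pu, rfl⟩))
      have h4 : (u : ℕ) ≠ (w pv : ℕ) :=
        hval_ne _ _ (fun h => hu (h ▸ ⟨pv, rfl⟩))
      have h5 : (u : ℕ) ≠ (v : ℕ) := hval_ne _ _ huv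
      have m1 := modsucc13 (2 * ℓ) (u : ℕ) hub
      have m2 := modsucc13 (2 * ℓ) (v : ℕ) hvb
      have m3 := modsucc13 (2 * ℓ) (w pu : ℕ) hpub
      have m4 := modsucc13 (2 * ℓ) (w pv : ℕ) hpvb
      omega
    · intro u hu heq
      obtain ⟨x0, hx0m, hx0⟩ := hblocks 0 (by omega)
      obtain ⟨x1, hx1m, hx1⟩ := hblocks 1 (by omega)
      obtain ⟨x2, hx2m, hx2⟩ := hblocks 2 (by omega)
      have hn : ∀ x : Fin (2 * ℓ), x ∈ Set.range w →
          x ∈ (CycleG (2 * ℓ)).neighborSet u := by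
        intro x hx
        rw [← heq] at hx; exact hx.1
      have h0 : ((u : ℕ) + 1) % (2 * ℓ) = (x0 : ℕ) ∨
          ((x0 : ℕ) + 1) % (2 * ℓ) = (u : ℕ) := (hn x0 hx0m).2
      have h1 : ((u : ℕ) + 1) % (2 * ℓ) = (x1 : ℕ) ∨
          ((x1 : ℕ) + 1) % (2 * ℓ) = (u : ℕ) := (hn x1 hx1m).2
      have h2 : ((u : ℕ) + 1) % (2 * ℓ) = (x2 : ℕ) ∨
          ((x2 : ℕ) + 1) % (2 * ℓ) = (u : ℕ) := (hn x2 hx2m).2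
      have hub := u.isLt
      have m0 := modsucc13 (2 * ℓ) (u : ℕ) hub
      have m1 := modsucc13 (2 * ℓ) (x0 : ℕ) x0.isLt
      have m2 := modsucc13 (2 * ℓ) (x1 : ℕ) x1.isLt
      have m3 := modsucc13 (2 * ℓ) (x2 : ℕ) x2.isLt
      omega
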